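/- Fix n ∈ ℕ and any evaluation map eval : {0,1}^* → ({0,1}^* → {0,1}). Let 𝒞 be any infinite class of functions {0,1}^* → {0,1}, and let L be an algorithm taking n labeled examples from {0,1}^* × {0,1} and outputting a (random) string in {0,1}^*, interpreted as the hypothesis eval of that string. Suppose L is pure 1-differentially private and is a (1/2, 1/2)-uniform-PAC learner for 𝒞. Then for every labeled sample S of size n, the expected description length E_{w ← L(S)}[|w|] is infinite. -/
import Mathlib


open MeasureTheory

/-- Strings `{0,1}^*` (and everything built from them) carry the discrete σ-algebra. -/
instance : MeasurableSpace (List Bool) := ⊤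

/-- Two labeled samples differ in at most one entry (an entry may be replaced by any
element of `{0,1}^* × {0,1}`). -/
def Neighboring {X : Type*} {n : ℕ} (S S' : Fin n → X) : Prop :=
  ∃ i : Fin n, ∀ j : Fin n, j ≠ i → S j = S' j

open scoped ENNReal

instance : MeasurableSingletonClass (List Bool) := ⟨fun _ => MeasurableSpace.measurableSet_top⟩

lemma measSet_all (s : Set (List Bool × Bool)) : MeasurableSet s :=
  s.to_countable.measurableSet


-- counting lemma
lemma counting (eval : List Bool → (List Bool → Bool)) (𝒞 : Set (List Bool → Bool))
    (h𝒞 : 𝒞.Infinite) (M : ℕ) :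
    ∃ c ∈ 𝒞, ∃ y0 y1 : List Bool,
      (∀ w : List Bool, w.length ≤ M → eval w y0 = eval w y1) ∧ c y0 ≠ c y1 := by
  classical
  by_contra hcon
  push_neg at hcon
  have hconst : ∀ c ∈ 𝒞, ∀ y0 y1 : List Bool,
      (∀ w : List Bool, w.length ≤ M → eval w y0 = eval w y1) → c y0 = c y1 := by
    intro c hc y0 y1 h
    by_contra hne
    exact hne (hcon c hc y0 y1 h)
  set K := {w : List Bool // w.length ≤ M} with hK
  haveI : Finite K := (List.finite_length_le Bool M).to_subtype
  set key : List Bool → (K → Bool) := fun y w => eval w.1 y with hkey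
  have hinj : Function.Injective
      (fun c : 𝒞 => (fun p : K → Bool =>
        if h : ∃ y, key y = p then (c : List Bool → Bool) h.choose else false)) := by
    intro c c' h
    have hval : ∀ y : List Bool, (c : List Bool → Bool) y = (c' : List Bool → Bool) y := by
      intro y
      have hy : ∃ y', key y' = key y := ⟨y, rfl⟩
      have h1 : (c : List Bool → Bool) hy.choose = (c' : List Bool → Bool) hy.choose := by
        have := congrFun h (key y)
        simpa [hy] using this
      have hkeq : key hy.choose = key y := hy.choose_spec
      have heq : ∀ w : List Bool, w.length ≤ M → eval w hy.choose = eval w y := by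
        intro w hw
        exact congrFun hkeq ⟨w, hw⟩
      have h2 : (c : List Bool → Bool) hy.choose = (c : List Bool → Bool) y :=
        hconst c c.2 _ _ heq
      have h3 : (c' : List Bool → Bool) hy.choose = (c' : List Bool → Bool) y :=
        hconst c' c'.2 _ _ heq
      rw [← h2, ← h3, h1]
    exact Subtype.ext (funext hval)
  haveI : Finite ↥𝒞 := Finite.of_injective _ hinj
  haveI := h𝒞.to_subtype
  exact not_finite ↥𝒞

lemma groupDP {n : ℕ} (L : (Fin n → (List Bool × Bool)) → PMF (List Bool))
    (hDP : ∀ S S' : Fin n → (List Bool × Bool), Neighboring S S' →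
      ∀ T : Set (List Bool),
        (L S).toOuterMeasure T ≤
          ENNReal.ofReal (Real.exp 1) * (L S').toOuterMeasure T)
    (S S' : Fin n → (List Bool × Bool)) (T : Set (List Bool)) :
    (L S').toOuterMeasure T ≤
      (ENNReal.ofReal (Real.exp 1)) ^ n * (L S).toOuterMeasure T := by
  set e := ENNReal.ofReal (Real.exp 1) with he
  have h1e : 1 ≤ e := by
    rw [he]
    rw [ENNReal.one_le_ofReal]
    have := Real.add_one_le_exp (1 : ℝ)
    linarith
  set g : ℕ → (Fin n → (List Bool × Bool)) := fun k j => if (j : ℕ) < k then S' j else S j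
    with hg
  have key : ∀ k : ℕ, (L (g k)).toOuterMeasure T ≤ e ^ k * (L S).toOuterMeasure T := by
    intro k
    induction k with
    | zero =>
      have : g 0 = S := by funext j; simp [hg]
      rw [this]; simp
    | succ k ih =>
      by_cases hk : k < n
      · have hN : Neighboring (g (k + 1)) (g k) := by
          refine ⟨⟨k, hk⟩, fun j hj => ?_⟩
          have hjk : (j : ℕ) ≠ k := fun h => hj (Fin.ext h)
          simp only [hg]
          rcases lt_trichotomy (j : ℕ) k with h | h | h
          · simp [h, Nat.lt_succ_of_lt h]
          · exact absurd h hjk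
          · rw [if_neg (Nat.not_lt.mpr (Nat.succ_le_of_lt h)), if_neg (Nat.not_lt.mpr (Nat.le_of_lt h))]
        calc (L (g (k + 1))).toOuterMeasure T ≤ e * (L (g k)).toOuterMeasure T :=
              hDP _ _ hN T
          _ ≤ e * (e ^ k * (L S).toOuterMeasure T) := by
              exact mul_le_mul_right ih e
          _ = e ^ (k + 1) * (L S).toOuterMeasure T := by ring
      · have hgg : g (k + 1) = g k := by
          funext j
          have hj : (j : ℕ) < n := j.2
          have h1 : (j : ℕ) < k := lt_of_lt_of_le hj (Nat.not_lt.mp hk)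
          simp [hg, h1, Nat.lt_succ_of_lt h1]
        rw [hgg]
        calc (L (g k)).toOuterMeasure T ≤ e ^ k * (L S).toOuterMeasure T := ih
          _ ≤ e ^ (k + 1) * (L S).toOuterMeasure T := by
              exact mul_le_mul_left (pow_le_pow_right' h1e (Nat.le_succ k)) _
  have hgn : g n = S' := by
    funext j
    simp [hg, j.2]
  rw [← hgn]
  exact key n


/-- **Proposition 3.17: no pure-private uniform learner for any infinite class has finite
expected description length.**  Fix `n` and an evaluation map
`eval : {0,1}^* → ({0,1}^* → {0,1})`, and let `𝒞` be any infinite class of functions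
`{0,1}^* → {0,1}`.  If `L`, taking `n` labeled examples and outputting a string
interpreted as a hypothesis via `eval`, is pure `1`-differentially private and a
`(1/2, 1/2)`-uniform-PAC learner for `𝒞`, then on every labeled sample `S` the expected
description length `E_{w ← L(S)}[|w|]` is infinite. -/
theorem stmt_18 (n : ℕ) (eval : List Bool → (List Bool → Bool))
    (𝒞 : Set (List Bool → Bool)) (h𝒞 : 𝒞.Infinite)
    (L : (Fin n → (List Bool × Bool)) → PMF (List Bool))
    -- pure 1-differential privacy
    (hDP : ∀ S S' : Fin n → (List Bool × Bool), Neighboring S S' →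
      ∀ T : Set (List Bool),
        (L S).toOuterMeasure T ≤
          ENNReal.ofReal (Real.exp 1) * (L S').toOuterMeasure T)
    -- (1/2, 1/2)-uniform-PAC learning of 𝒞
    (hPAC : ∀ c ∈ 𝒞, ∀ D : Measure (List Bool × Bool),
      IsProbabilityMeasure D →
      D {p : List Bool × Bool | p.2 ≠ c p.1} = 0 →
      (1 / 2 : ENNReal) ≤
        ∫⁻ S, (L S).toOuterMeasure
            {w : List Bool | D {p : List Bool × Bool | eval w p.1 ≠ p.2} <
              ENNReal.ofReal (1 / 2)}
          ∂(Measure.pi fun _ : Fin n => D)) :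
    ∀ S : Fin n → (List Bool × Bool),
      ∑' w : List Bool, L S w * (w.length : ENNReal) = ⊤ := by
  intro S
  classical
  set A := (ENNReal.ofReal (Real.exp 1)) ^ n with hA
  have hA_ne_top : A ≠ ⊤ := by
    rw [hA]
    exact ENNReal.pow_ne_top ENNReal.ofReal_ne_top
  set P : ℕ → ℝ≥0∞ := fun M => (L S).toOuterMeasure {w : List Bool | M < w.length} with hP
  have hkey : ∀ M : ℕ, (1 / 2 : ℝ≥0∞) ≤ A * P M := by
    intro M
    obtain ⟨c, hc, y0, y1, hsame, hdiff⟩ := counting eval 𝒞 h𝒞 M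
    set D : Measure (List Bool × Bool) :=
      (1 / 2 : ℝ≥0∞) • Measure.dirac (y0, c y0) + (1 / 2 : ℝ≥0∞) • Measure.dirac (y1, c y1)
      with hD
    haveI hDprob : IsProbabilityMeasure D := by
      constructor
      simp only [hD, Measure.add_apply, Measure.smul_apply, smul_eq_mul,
        Measure.dirac_apply' _ MeasurableSet.univ]
      simp
      rw [ENNReal.inv_two_add_inv_two]
    have hreal : D {p : List Bool × Bool | p.2 ≠ c p.1} = 0 := by
      simp only [hD, Measure.add_apply, Measure.smul_apply, smul_eq_mul,
        Measure.dirac_apply' _ (measSet_all _)]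
      rw [Set.indicator_of_notMem (by simp), Set.indicator_of_notMem (by simp)]
      simp
    have hPAC' := hPAC c hc D hDprob hreal
    have hGood : {w : List Bool |
        D {p : List Bool × Bool | eval w p.1 ≠ p.2} < ENNReal.ofReal (1 / 2)} ⊆
        {w : List Bool | M < w.length} := by
      intro w hw
      simp only [Set.mem_setOf_eq] at hw ⊢
      by_contra hlen
      have hlen' : w.length ≤ M := Nat.not_lt.mp hlen
      have hb : eval w y0 = eval w y1 := hsame w hlen'
      have hDE : D {p : List Bool × Bool | eval w p.1 ≠ p.2} = 1 / 2 := by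
        simp only [hD, Measure.add_apply, Measure.smul_apply, smul_eq_mul,
          Measure.dirac_apply' _ (measSet_all _)]
        have trich : ∀ a b0 b1 : Bool, b0 ≠ b1 →
            ((a ≠ b0 ∧ ¬(a ≠ b1)) ∨ (¬(a ≠ b0) ∧ a ≠ b1)) := by decide
        have hcases : (eval w y0 ≠ c y0 ∧ ¬(eval w y1 ≠ c y1)) ∨
            (¬(eval w y0 ≠ c y0) ∧ eval w y1 ≠ c y1) := by
          rw [hb]
          exact trich (eval w y1) (c y0) (c y1) hdiff
        rcases hcases with ⟨h0, h1⟩ | ⟨h0, h1⟩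
        · rw [Set.indicator_of_mem (by simpa using h0),
            Set.indicator_of_notMem (by simpa using h1)]
          simp
        · rw [Set.indicator_of_notMem (by simpa using h0),
            Set.indicator_of_mem (by simpa using h1)]
          simp
      rw [hDE] at hw
      have : ENNReal.ofReal (1 / 2 : ℝ) = (1 / 2 : ℝ≥0∞) := by
        rw [ENNReal.ofReal_div_of_pos (by norm_num)]
        norm_num
      rw [this] at hw
      exact lt_irrefl _ hw
    haveI : IsProbabilityMeasure (Measure.pi fun _ : Fin n => D) := inferInstance
    calc (1 / 2 : ℝ≥0∞)
        ≤ ∫⁻ S', (L S').toOuterMeasure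
            {w : List Bool | D {p : List Bool × Bool | eval w p.1 ≠ p.2} <
              ENNReal.ofReal (1 / 2)} ∂(Measure.pi fun _ : Fin n => D) := hPAC'
      _ ≤ ∫⁻ _, A * P M ∂(Measure.pi fun _ : Fin n => D) := by
          apply lintegral_mono
          intro S'
          exact ((L S').toOuterMeasure.mono hGood).trans (groupDP L hDP S S' _)
      _ = A * P M := by rw [lintegral_const, measure_univ, mul_one]
  -- rewrite the tsum
  have hswap : ∑' w : List Bool, L S w * (w.length : ℝ≥0∞) = ∑' M : ℕ, P M := by
    have h1 : ∀ w : List Bool,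
        L S w * (w.length : ℝ≥0∞) = ∑' M : ℕ, if M < w.length then L S w else 0 := by
      intro w
      rw [tsum_eq_sum (s := Finset.range w.length)
        (fun M hM => if_neg (by simpa using hM))]
      rw [Finset.sum_congr rfl (fun M hM => if_pos (Finset.mem_range.mp hM))]
      rw [Finset.sum_const, Finset.card_range, nsmul_eq_mul, mul_comm]
    calc ∑' w : List Bool, L S w * (w.length : ℝ≥0∞)
        = ∑' (w : List Bool) (M : ℕ), if M < w.length then L S w else 0 := tsum_congr h1
      _ = ∑' (M : ℕ) (w : List Bool), if M < w.length then L S w else 0 :=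
          ENNReal.tsum_comm
      _ = ∑' M : ℕ, P M := by
          refine tsum_congr fun M => ?_
          show _ = (L S).toOuterMeasure {w : List Bool | M < w.length}
          rw [PMF.toOuterMeasure_apply]
          exact tsum_congr fun w => by rw [Set.indicator_apply]; rfl
  rw [hswap]
  by_contra hne
  have hfin : A * ∑' M : ℕ, P M ≠ ⊤ := ENNReal.mul_ne_top hA_ne_top hne
  apply hfin
  rw [← ENNReal.tsum_mul_left]
  refine top_le_iff.mp ?_
  calc (⊤ : ℝ≥0∞) = ∑' _ : ℕ, (1 / 2 : ℝ≥0∞) :=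
        (ENNReal.tsum_const_eq_top_of_ne_zero (by norm_num)).symm
    _ ≤ ∑' M : ℕ, A * P M := ENNReal.tsum_le_tsum hkey
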